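/- Fix reals a > b > 0, w0 > 0, w1 > 0 and λ > 0 such that w1·(a − b) > w0·a and w1·(a − b)/(2·ln 2) ≥ λ. Set δ = 1/b − 1/a, γ = w0/(2·λ·ln 2) − 1/a, ζ = (w1/w0)·δ − 1/b, and β = (1/2)·√(δ·(δ + 2·w1/(λ·ln 2))) − (1/2)·(1/b + 1/a), and assume γ < ζ. For p0, p1 ≥ 0 define L1(p0, p1) = (w0/2)·log2((1 + a·(p0 + p1))/(1 + a·p1)) + (w1/2)·log2((1 + a·p1)/(1 + b·p1)) − λ·(p0 + p1). Then 0 ≤ β ≤ ζ and L1(p0, p1) ≤ L1(0, β) for all p0, p1 ≥ 0; i.e., allocating all power to the confidential message at level β is optimal. -/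

import Mathlib

private lemma log_sub_log_le {u v : ℝ} (hu : 0 < u) (hv : 0 < v) :
    Real.log u - Real.log v ≤ (u - v) / v := by
  have h := Real.log_le_sub_one_of_pos (div_pos hu hv)
  rw [Real.log_div hu.ne' hv.ne'] at h
  have h2 : u / v - 1 = (u - v) / v := by field_simp
  linarith

private lemma A_le_A_gamma {a w0 lam c γ x : ℝ} (ha : 0 < a) (hw0 : 0 < w0)
    (hlam : 0 < lam) (hc : 0 < c) (hx : 0 ≤ x)
    (hγ : 1 + a * γ = w0 * a / (2 * lam * c)) :
    w0 / 2 * Real.log (1 + a * x) / c - lam * x ≤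
    w0 / 2 * Real.log (1 + a * γ) / c - lam * γ := by
  have hgpos : 0 < 1 + a * γ := by
    rw [hγ]; positivity
  have hxpos : 0 < 1 + a * x := by nlinarith
  have h := log_sub_log_le hxpos hgpos
  have h2 : ((1 + a * x) - (1 + a * γ)) / (1 + a * γ) = a * (x - γ) / (1 + a * γ) := by
    ring_nf
  rw [h2] at h
  have key : w0 / 2 * (a * (x - γ) / (1 + a * γ)) / c = lam * (x - γ) := by
    rw [hγ]; field_simp
  have hm : w0 / 2 * (Real.log (1 + a * x) - Real.log (1 + a * γ)) / c ≤
      w0 / 2 * (a * (x - γ) / (1 + a * γ)) / c := by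
    apply div_le_div_of_nonneg_right _ hc.le
    exact mul_le_mul_of_nonneg_left h (by positivity)
  rw [key] at hm
  have hdist : w0 / 2 * (Real.log (1 + a * x) - Real.log (1 + a * γ)) / c =
      w0 / 2 * Real.log (1 + a * x) / c - w0 / 2 * Real.log (1 + a * γ) / c := by ring
  linarith

private lemma A_anti {a w0 lam c γ x y : ℝ} (ha : 0 < a) (hw0 : 0 < w0)
    (hlam : 0 < lam) (hc : 0 < c) (hγy : γ ≤ y) (hyx : y ≤ x)
    (hγ : 1 + a * γ = w0 * a / (2 * lam * c)) :
    w0 / 2 * Real.log (1 + a * x) / c - lam * x ≤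
    w0 / 2 * Real.log (1 + a * y) / c - lam * y := by
  have hgpos : 0 < 1 + a * γ := by rw [hγ]; positivity
  have hypos : 0 < 1 + a * y := by nlinarith
  have hxpos : 0 < 1 + a * x := by nlinarith
  have h := log_sub_log_le hxpos hypos
  have h2 : ((1 + a * x) - (1 + a * y)) / (1 + a * y) = a * (x - y) / (1 + a * y) := by
    ring_nf
  rw [h2] at h
  have hstep : a * (x - y) / (1 + a * y) ≤ a * (x - y) / (1 + a * γ) := by
    apply div_le_div_of_nonneg_left ?_ hgpos ?_ <;> nlinarith
  have key : w0 / 2 * (a * (x - y) / (1 + a * γ)) / c = lam * (x - y) := by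
    rw [hγ]; field_simp
  have hm : w0 / 2 * (Real.log (1 + a * x) - Real.log (1 + a * y)) / c ≤
      w0 / 2 * (a * (x - y) / (1 + a * γ)) / c := by
    apply div_le_div_of_nonneg_right _ hc.le
    apply mul_le_mul_of_nonneg_left (le_trans h hstep) (by positivity)
  rw [key] at hm
  have hdist : w0 / 2 * (Real.log (1 + a * x) - Real.log (1 + a * y)) / c =
      w0 / 2 * Real.log (1 + a * x) / c - w0 / 2 * Real.log (1 + a * y) / c := by ring
  linarith

private lemma g_le_g_beta {a b w1 lam c β x : ℝ} (hb : 0 < b) (hba : b < a)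
    (hw1 : 0 < w1) (hlam : 0 < lam) (hc : 0 < c) (hβ : 0 ≤ β) (hx : 0 ≤ x)
    (hK : w1 * (a - b) = 2 * lam * c * ((1 + a * β) * (1 + b * β))) :
    w1 / 2 * (Real.log (1 + a * x) - Real.log (1 + b * x)) / c - lam * x ≤
    w1 / 2 * (Real.log (1 + a * β) - Real.log (1 + b * β)) / c - lam * β := by
  have hu : 0 < 1 + a * x := by nlinarith
  have hv : 0 < 1 + b * x := by nlinarith
  have hU : 0 < 1 + a * β := by nlinarith
  have hV : 0 < 1 + b * β := by nlinarith
  have h := log_sub_log_le (mul_pos hu hV) (mul_pos hv hU)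
  rw [Real.log_mul hu.ne' hV.ne', Real.log_mul hv.ne' hU.ne'] at h
  have hm : w1 / 2 * (Real.log (1 + a * x) + Real.log (1 + b * β)
      - (Real.log (1 + b * x) + Real.log (1 + a * β))) / c ≤
      w1 / 2 * (((1 + a * x) * (1 + b * β) - (1 + b * x) * (1 + a * β)) /
        ((1 + b * x) * (1 + a * β))) / c := by
    apply div_le_div_of_nonneg_right _ hc.le
    exact mul_le_mul_of_nonneg_left h (by positivity)
  have key : w1 / 2 * (((1 + a * x) * (1 + b * β) - (1 + b * x) * (1 + a * β)) /
        ((1 + b * x) * (1 + a * β))) / c - lam * (x - β)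
      = -(lam * b * (x - β) ^ 2 / (1 + b * x)) := by
    field_simp
    linear_combination (x - β) * hK
  have hnn : 0 ≤ lam * b * (x - β) ^ 2 / (1 + b * x) := by positivity
  have hdist : w1 / 2 * (Real.log (1 + a * x) + Real.log (1 + b * β)
      - (Real.log (1 + b * x) + Real.log (1 + a * β))) / c =
      w1 / 2 * (Real.log (1 + a * x) - Real.log (1 + b * x)) / c -
      w1 / 2 * (Real.log (1 + a * β) - Real.log (1 + b * β)) / c := by ring
  linarith

private lemma B_mono {a b w0 w1 zeta : ℝ} (hb : 0 < b) (hba : b < a) (hw0 : 0 < w0)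
    (hzeta : w1 * (a - b) - w0 * a = w0 * a * b * zeta)
    {x y : ℝ} (hx : 0 ≤ x) (hxy : x ≤ y) (hy : y ≤ zeta) :
    (w1 - w0) / 2 * Real.log (1 + a * x) - w1 / 2 * Real.log (1 + b * x) ≤
    (w1 - w0) / 2 * Real.log (1 + a * y) - w1 / 2 * Real.log (1 + b * y) := by
  have ha : 0 < a := hb.trans hba
  set f : ℝ → ℝ := fun t => (w1 - w0) / 2 * Real.log (1 + a * t) - w1 / 2 * Real.log (1 + b * t) with hf
  have hderiv : ∀ t : ℝ, 0 ≤ t → HasDerivAt f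
      ((w1 - w0) / 2 * (a / (1 + a * t)) - w1 / 2 * (b / (1 + b * t))) t := by
    intro t ht
    have h1 : 0 < 1 + a * t := by nlinarith
    have h2 : 0 < 1 + b * t := by nlinarith
    have da : HasDerivAt (fun s : ℝ => 1 + a * s) a t := by
      simpa using ((hasDerivAt_id t).const_mul a).const_add 1
    have db : HasDerivAt (fun s : ℝ => 1 + b * s) b t := by
      simpa using ((hasDerivAt_id t).const_mul b).const_add 1
    have la : HasDerivAt (fun s : ℝ => Real.log (1 + a * s)) ((1 + a * t)⁻¹ * a) t := by
      have := (Real.hasDerivAt_log h1.ne').comp t da; exact this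
    have lb : HasDerivAt (fun s : ℝ => Real.log (1 + b * s)) ((1 + b * t)⁻¹ * b) t := by
      have := (Real.hasDerivAt_log h2.ne').comp t db; exact this
    have := (la.const_mul ((w1 - w0) / 2)).sub (lb.const_mul (w1 / 2))
    rw [show (w1 - w0) / 2 * (a / (1 + a * t)) - w1 / 2 * (b / (1 + b * t)) =
      (w1 - w0) / 2 * ((1 + a * t)⁻¹ * a) - w1 / 2 * ((1 + b * t)⁻¹ * b) by ring]
    exact this
  have hmono : MonotoneOn f (Set.Icc 0 zeta) := by
    have hconv : Convex ℝ (Set.Icc (0:ℝ) zeta) := convex_Icc _ _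
    have hdiff : DifferentiableOn ℝ f (interior (Set.Icc (0:ℝ) zeta)) := by
      rw [interior_Icc]
      exact fun t ht => (hderiv t ht.1.le).differentiableAt.differentiableWithinAt
    have hcont : ContinuousOn f (Set.Icc 0 zeta) :=
      fun t ht => (hderiv t ht.1).differentiableAt.continuousAt.continuousWithinAt
    apply monotoneOn_of_deriv_nonneg hconv hcont hdiff
    intro t ht
    rw [interior_Icc] at ht
    rw [(hderiv t ht.1.le).deriv]
    have h1 : 0 < 1 + a * t := by nlinarith [ht.1]
    have h2 : 0 < 1 + b * t := by nlinarith [ht.1]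
    have heq : (w1 - w0) / 2 * (a / (1 + a * t)) - w1 / 2 * (b / (1 + b * t))
        = ((w1 - w0) * a * (1 + b * t) - w1 * b * (1 + a * t)) / (2 * (1 + a * t) * (1 + b * t)) := by
      rw [eq_div_iff (mul_pos (mul_pos two_pos h1) h2).ne']
      have e1 : a / (1 + a * t) * (1 + a * t) = a := div_mul_cancel₀ _ h1.ne'
      have e2 : b / (1 + b * t) * (1 + b * t) = b := div_mul_cancel₀ _ h2.ne'
      linear_combination (w1 - w0) * (1 + b * t) * e1 - w1 * (1 + a * t) * e2
    have hnum : (w1 - w0) * a * (1 + b * t) - w1 * b * (1 + a * t) = w0 * a * b * (zeta - t) := by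
      linear_combination hzeta
    rw [heq, hnum]
    have h3 : 0 ≤ zeta - t := by linarith [ht.2]
    positivity
  exact hmono ⟨hx, hxy.trans hy⟩ ⟨hx.trans hxy, hy⟩ hxy

set_option maxHeartbeats 1600000 in
/-- When `γ < ζ` and `u1(0) ≥ 0`, allocating all power to the confidential
message at level `β` is optimal for the per-sub-channel Lagrangian `L1`, and
`0 ≤ β ≤ ζ`. -/
theorem L1_max_at_beta (a b w0 w1 lam : ℝ) (hb : 0 < b) (hba : b < a)
    (hw0 : 0 < w0) (hw1 : 0 < w1) (hlam : 0 < lam)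
    (hcase : w0 * a < w1 * (a - b))
    (hu1zero : lam ≤ w1 * (a - b) / (2 * Real.log 2)) :
    let δ : ℝ := 1 / b - 1 / a
    let γ : ℝ := w0 / (2 * lam * Real.log 2) - 1 / a
    let ζ : ℝ := (w1 / w0) * δ - 1 / b
    let β : ℝ := (1 / 2) * Real.sqrt (δ * (δ + 2 * w1 / (lam * Real.log 2))) -
      (1 / 2) * (1 / b + 1 / a)
    let L1 : ℝ → ℝ → ℝ := fun p0 p1 =>
      (w0 / 2) * Real.logb 2 ((1 + a * (p0 + p1)) / (1 + a * p1)) +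
      (w1 / 2) * Real.logb 2 ((1 + a * p1) / (1 + b * p1)) - lam * (p0 + p1)
    γ < ζ →
      (0 ≤ β ∧ β ≤ ζ ∧ ∀ p0 p1 : ℝ, 0 ≤ p0 → 0 ≤ p1 → L1 p0 p1 ≤ L1 0 β) := by
  intro δ γ ζ β L1 hγζ
  have ha : 0 < a := hb.trans hba
  set c : ℝ := Real.log 2 with hcdef
  have hc : 0 < c := Real.log_pos (by norm_num)
  have hδ : δ = 1 / b - 1 / a := rfl
  have hγ : γ = w0 / (2 * lam * c) - 1 / a := rfl
  have hζ : ζ = (w1 / w0) * δ - 1 / b := rfl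
  have hβ : β = (1 / 2) * Real.sqrt (δ * (δ + 2 * w1 / (lam * c))) -
      (1 / 2) * (1 / b + 1 / a) := rfl
  have hL1 : L1 = fun p0 p1 =>
      (w0 / 2) * Real.logb 2 ((1 + a * (p0 + p1)) / (1 + a * p1)) +
      (w1 / 2) * Real.logb 2 ((1 + a * p1) / (1 + b * p1)) - lam * (p0 + p1) := rfl
  clear_value δ γ ζ β L1
  have hδpos : 0 < δ := by
    rw [hδ]; have := one_div_lt_one_div_of_lt hb hba; linarith
  have hzeta : w1 * (a - b) - w0 * a = w0 * a * b * ζ := by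
    rw [hζ, hδ]; field_simp
  have hζpos : 0 < ζ := by
    by_contra h
    push_neg at h
    have h2 := mul_le_mul_of_nonneg_left h (by positivity : (0:ℝ) ≤ w0 * a * b)
    rw [mul_zero] at h2
    linarith
  have hγid : 1 + a * γ = w0 * a / (2 * lam * c) := by
    rw [hγ]; field_simp; ring
  have hu1 : 2 * lam * c ≤ w1 * (a - b) := by
    rw [le_div_iff₀ (by positivity : (0:ℝ) < 2 * c)] at hu1zero
    nlinarith [hu1zero]
  have hD : 0 ≤ δ * (δ + 2 * w1 / (lam * c)) := by positivity
  have hs : Real.sqrt (δ * (δ + 2 * w1 / (lam * c))) ^ 2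
      = δ * (δ + 2 * w1 / (lam * c)) := Real.sq_sqrt hD
  have hβ0 : 0 ≤ β := by
    rw [hβ]
    have h1 : 1 / b + 1 / a ≤ Real.sqrt (δ * (δ + 2 * w1 / (lam * c))) := by
      rw [Real.le_sqrt (by positivity) hD]
      have e1 : δ * (δ + 2 * w1 / (lam * c)) - (1/b + 1/a)^2
          = (2 * w1 * (a - b) - 4 * lam * c) / (lam * c * a * b) := by
        rw [hδ]; field_simp; ring
      have e2 : 0 ≤ (2 * w1 * (a - b) - 4 * lam * c) / (lam * c * a * b) := by
        apply div_nonneg _ (by positivity)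
        linarith
      linarith
    linarith
  have hsq : (1 + a * β) * (1 + b * β)
      = a * b * (Real.sqrt (δ * (δ + 2 * w1 / (lam * c))) ^ 2 - δ ^ 2) / 4 := by
    rw [hβ, hδ]; field_simp; ring
  have hK : w1 * (a - b) = 2 * lam * c * ((1 + a * β) * (1 + b * β)) := by
    rw [hsq, hs, hδ]; field_simp; ring
  have hβU : 0 < 1 + a * β := by have := mul_nonneg ha.le hβ0; linarith
  have hβV : 0 < 1 + b * β := by have := mul_nonneg hb.le hβ0; linarith
  -- β ≤ ζ
  have hVz : 0 < 1 + b * ζ := by have := mul_pos hb hζpos; linarith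
  have hβζ : β ≤ ζ := by
    by_contra hcon
    push_neg at hcon
    have h1 : w0 * a < (1 + a * ζ) * (2 * lam * c) := by
      have h0 : 1 + a * γ < 1 + a * ζ := by
        have := mul_lt_mul_of_pos_left hγζ ha
        linarith
      rw [hγid] at h0
      rw [div_lt_iff₀ (by positivity : (0:ℝ) < 2 * lam * c)] at h0
      exact h0
    have h3 : w1 * (a - b) = w0 * a * (1 + b * ζ) := by linear_combination hzeta
    have h4 : w1 * (a - b) < 2 * lam * c * ((1 + a * ζ) * (1 + b * ζ)) := by
      rw [h3]
      calc w0 * a * (1 + b * ζ) < ((1 + a * ζ) * (2 * lam * c)) * (1 + b * ζ) :=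
            mul_lt_mul_of_pos_right h1 hVz
        _ = 2 * lam * c * ((1 + a * ζ) * (1 + b * ζ)) := by ring
    have h5 : (1 + a * ζ) * (1 + b * ζ) < (1 + a * β) * (1 + b * β) := by
      have ha1 : 1 + a * ζ < 1 + a * β := by
        have := mul_lt_mul_of_pos_left hcon ha; linarith
      have hb1 : 1 + b * ζ ≤ 1 + b * β := by
        have := mul_le_mul_of_nonneg_left hcon.le hb.le; linarith
      exact mul_lt_mul ha1 hb1 hVz hβU.le
    have h6 := mul_lt_mul_of_pos_left h5 (by positivity : (0:ℝ) < 2 * lam * c)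
    linarith
  refine ⟨hβ0, hβζ, ?_⟩
  intro p0 p1 hp0 hp1
  have hP : 0 ≤ p0 + p1 := by linarith
  have hup : 0 < 1 + a * p1 := by have := mul_nonneg ha.le hp1; linarith
  have hvp : 0 < 1 + b * p1 := by have := mul_nonneg hb.le hp1; linarith
  have huP : 0 < 1 + a * (p0 + p1) := by have := mul_nonneg ha.le hP; linarith
  have hL1a : L1 p0 p1 = (w0 / 2 * Real.log (1 + a * (p0 + p1)) / c - lam * (p0 + p1))
      + ((w1 - w0) / 2 * Real.log (1 + a * p1) - w1 / 2 * Real.log (1 + b * p1)) / c := by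
    rw [hL1]
    simp only
    rw [← Real.log_div_log, ← Real.log_div_log,
      Real.log_div huP.ne' hup.ne', Real.log_div hup.ne' hvp.ne']
    ring
  have hL1b : L1 0 β = w1 / 2 * (Real.log (1 + a * β) - Real.log (1 + b * β)) / c
      - lam * β := by
    rw [hL1]
    simp only [zero_add]
    rw [div_self hβU.ne', Real.logb_one, ← Real.log_div_log,
      Real.log_div hβU.ne' hβV.ne']
    ring
  set m : ℝ := max p1 γ with hm
  have hp1m : p1 ≤ m := le_max_left _ _
  have hm0 : 0 ≤ m := le_trans hp1 hp1m
  have hum : 0 < 1 + a * m := by have := mul_nonneg ha.le hm0; linarith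
  have hvm : 0 < 1 + b * m := by have := mul_nonneg hb.le hm0; linarith
  have hA : w0 / 2 * Real.log (1 + a * (p0 + p1)) / c - lam * (p0 + p1) ≤
      w0 / 2 * Real.log (1 + a * m) / c - lam * m := by
    rcases le_total p1 γ with h | h
    · rw [hm, max_eq_right h]
      exact A_le_A_gamma ha hw0 hlam hc hP hγid
    · rw [hm, max_eq_left h]
      exact A_anti ha hw0 hlam hc h (by linarith) hγid
  have hB : ((w1 - w0) / 2 * Real.log (1 + a * p1) - w1 / 2 * Real.log (1 + b * p1)) / c ≤
      ((w1 - w0) / 2 * Real.log (1 + a * m) - w1 / 2 * Real.log (1 + b * m)) / c := by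
    rcases le_total p1 γ with h | h
    · rw [hm, max_eq_right h]
      exact div_le_div_of_nonneg_right
        (B_mono hb hba hw0 hzeta hp1 h (le_of_lt hγζ)) hc.le
    · rw [hm, max_eq_left h]
  have hg : w1 / 2 * (Real.log (1 + a * m) - Real.log (1 + b * m)) / c - lam * m ≤
      w1 / 2 * (Real.log (1 + a * β) - Real.log (1 + b * β)) / c - lam * β :=
    g_le_g_beta hb hba hw1 hlam hc hβ0 hm0 hK
  have hABm : (w0 / 2 * Real.log (1 + a * m) / c - lam * m)
      + ((w1 - w0) / 2 * Real.log (1 + a * m) - w1 / 2 * Real.log (1 + b * m)) / c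
      = w1 / 2 * (Real.log (1 + a * m) - Real.log (1 + b * m)) / c - lam * m := by
    ring
  rw [hL1a, hL1b]
  linarith
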